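/- Suppose F detects isomorphisms. Let X be an object of T such that F X is an injective object of A and such that some (F, F X)-Eilenberg–MacLane object exists. Then X itself is an (F, F X)-Eilenberg–MacLane object; concretely, for every object Y of T the map Hom_T(Y, X) → Hom_A(F Y, F X) given by f ↦ F f is a bijection. -/
import Mathlib


open CategoryTheory Limits Pretriangulated

universe w v u v' u'

variable {T : Type u} [Category.{v} T] [HasZeroObject T] [HasShift T ℤ]
  [Preadditive T] [∀ n : ℤ, (CategoryTheory.shiftFunctor T n).Additive] [Pretriangulated T]
variable {A : Type u'} [Category.{v'} A] [Abelian A]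

/-- `E` is an `(F,I)`-Eilenberg–MacLane object: there is an isomorphism
`Hom_T(X, E) ≅ Hom_A(F X, I)` natural in `X` such that the canonical map `F E ⟶ I`
(the image of the identity of `E`) is an isomorphism. -/
def IsEMObject (F : T ⥤ A) (I : A) (E : T) : Prop :=
  ∃ e : ∀ X : T, (X ⟶ E) ≃ (F.obj X ⟶ I),
    (∀ ⦃X Y : T⦄ (f : X ⟶ Y) (g : Y ⟶ E), e X (f ≫ g) = F.map f ≫ e Y g) ∧
    IsIso (e E (𝟙 E))

/-- An object of `T` is `F`-injective if it is an `(F,I)`-Eilenberg–MacLane object for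
some injective object `I` of `A`. -/
def FInjective (F : T ⥤ A) (E : T) : Prop :=
  ∃ I : A, Injective I ∧ IsEMObject F I E

/-- A map `i : A₀ ⟶ B₀` in `T` is `F`-monic if `Hom_T(B₀, G) → Hom_T(A₀, G)` is surjective
for every `F`-injective object `G`. -/
def FMonic (F : T ⥤ A) {A₀ B₀ : T} (i : A₀ ⟶ B₀) : Prop :=
  ∀ G : T, FInjective F G → Function.Surjective (fun g : B₀ ⟶ G => i ≫ g)

/-- If `F` detects isomorphisms, `F X` is injective and some `(F, F X)`-Eilenberg–MacLane
object exists, then `X` itself is an `(F, F X)`-Eilenberg–MacLane object; concretely,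
`f ↦ F f : Hom_T(Y, X) → Hom_A(F Y, F X)` is a bijection for every `Y`. -/
theorem isEMObject_of_injective_image
    (F : T ⥤ A) [F.Additive] [F.IsHomological]
    (SA : A ≌ A) (comm : CategoryTheory.shiftFunctor T (1 : ℤ) ⋙ F ≅ F ⋙ SA.functor)
    (hdet : ∀ ⦃X Y : T⦄ (f : X ⟶ Y), IsIso f ↔ IsIso (F.map f))
    (X : T) (hinj : Injective (F.obj X))
    (hEM : ∃ E : T, IsEMObject F (F.obj X) E) :
    IsEMObject F (F.obj X) X ∧
      ∀ Y : T, Function.Bijective (fun f : Y ⟶ X => F.map f) := by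
  obtain ⟨E, e, hnat, hiso⟩ := hEM
  set φ : X ⟶ E := (e X).symm (𝟙 (F.obj X)) with hφ
  have heφ : e X φ = 𝟙 (F.obj X) := (e X).apply_symm_apply _
  have hFφ : F.map φ ≫ e E (𝟙 E) = 𝟙 (F.obj X) := by
    rw [← hnat φ (𝟙 E), Category.comp_id, heφ]
  have h1 : IsIso (F.map φ ≫ e E (𝟙 E)) := by rw [hFφ]; infer_instance
  have h2 : IsIso (F.map φ) := IsIso.of_isIso_comp_right (F.map φ) (e E (𝟙 E))
  have hφiso : IsIso φ := (hdet φ).mpr h2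
  have hbij : ∀ Y : T, Function.Bijective (fun f : Y ⟶ X => F.map f) := by
    intro Y
    have key : (fun f : Y ⟶ X => F.map f) = (e Y) ∘ (fun f : Y ⟶ X => f ≫ φ) := by
      funext f
      simp only [Function.comp_apply, hnat f φ, heφ, Category.comp_id]
    rw [key]
    exact (e Y).bijective.comp
      (⟨fun f => f ≫ φ, fun g => g ≫ inv φ, fun f => by simp, fun g => by simp⟩ :
        (Y ⟶ X) ≃ (Y ⟶ E)).bijective
  refine ⟨⟨fun Y => Equiv.ofBijective _ (hbij Y), ?_, ?_⟩, hbij⟩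
  · intro Y Z f g
    simp [Equiv.ofBijective]
  · simp only [Equiv.ofBijective_apply, F.map_id]
    infer_instance
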